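/- For a doubly stochastic N×N matrix β (N ≥ 2) with entries in [0,1] and any permutation Π of {1,...,N}, Perm(β.*(1-β)) ≥ 2 · ∏_i β_i^{Π(i)}(1-β_i^{Π(i)}). -/

import Mathlib

open Matrix Finset

lemma exists_cycle_perm {N : ℕ} (hN : 0 < N) (f : Fin N → Fin N) (hf : ∀ i, f i ≠ i) :
    ∃ τ : Equiv.Perm (Fin N), τ ≠ 1 ∧ ∀ i, τ i ≠ i → τ i = f i := by
  have hne : Nonempty (Fin N) := ⟨⟨0, hN⟩⟩
  -- find a periodic point
  obtain ⟨a, b, hab, heq⟩ : ∃ a b : ℕ, a ≠ b ∧ f^[a] ⟨0, hN⟩ = f^[b] ⟨0, hN⟩ := by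
    obtain ⟨a, b, hab, h⟩ := Finite.exists_ne_map_eq_of_infinite (fun n : ℕ => f^[n] ⟨0, hN⟩)
    exact ⟨a, b, hab, h⟩
  wlog hlt : a < b generalizing a b
  · exact this b a hab.symm heq.symm (by omega)
  set y := f^[a] ⟨0, hN⟩ with hy
  set p := b - a with hp
  have hp0 : 0 < p := by omega
  have hyp : f^[p] y = y := by
    rw [hy, ← Function.iterate_add_apply]
    have : p + a = b := by omega
    rw [this, ← heq]
  set C : Finset (Fin N) := (Finset.range p).image (fun n => f^[n] y) with hC
  -- orbit facts
  have hmul : ∀ k : ℕ, f^[k * p] y = y := by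
    intro k
    induction k with
    | zero => simp
    | succ k ih =>
      have : (k+1) * p = p + k * p := by ring
      rw [this, Function.iterate_add_apply, ih, hyp]
  have horb : ∀ n : ℕ, f^[n] y ∈ C := by
    intro n
    have hlt2 := Nat.mod_lt n hp0
    have hmod : f^[n] y = f^[n % p] y := by
      conv_lhs => rw [← Nat.mod_add_div n p]
      rw [Function.iterate_add_apply, Nat.mul_comm, hmul]
    rw [hmod]
    exact Finset.mem_image.mpr ⟨n % p, Finset.mem_range.mpr hlt2, rfl⟩
  have hclosed : ∀ i ∈ C, f i ∈ C := by
    intro i hi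
    obtain ⟨n, _, rfl⟩ := Finset.mem_image.mp hi
    have : f (f^[n] y) = f^[n+1] y := (Function.iterate_succ_apply' f n y).symm
    rw [this]; exact horb (n+1)
  have hinjC : ∀ i ∈ C, ∀ j ∈ C, f i = f j → i = j := by
    intro i hi j hj hfij
    obtain ⟨n, hn, rfl⟩ := Finset.mem_image.mp hi
    obtain ⟨m, hm, rfl⟩ := Finset.mem_image.mp hj
    have hrec : ∀ k : ℕ, f^[p-1] (f (f^[k] y)) = f^[k] y := by
      intro k
      rw [← Function.iterate_succ_apply, ← Function.iterate_add_apply]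
      have : (p - 1).succ + k = k + p := by omega
      rw [this, Function.iterate_add_apply, hyp]
    rw [← hrec n, ← hrec m, hfij]
  -- define t
  classical
  set t : Fin N → Fin N := fun i => if i ∈ C then f i else i with ht
  have hinj : Function.Injective t := by
    intro i j hij
    by_cases hi : i ∈ C <;> by_cases hj : j ∈ C <;>
      simp only [ht, hi, hj, if_pos, if_neg, if_true, if_false] at hij
    · exact hinjC i hi j hj hij
    · exact absurd (hij ▸ hclosed i hi) hj
    · exact absurd (hij.symm ▸ hclosed j hj) hi
    · exact hij
  refine ⟨Equiv.ofBijective t (Finite.injective_iff_bijective.mp hinj), ?_, ?_⟩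
  · intro h
    have hy0 : y ∈ C := by simpa using horb 0
    have : t y = y := by rw [← Equiv.ofBijective_apply t (Finite.injective_iff_bijective.mp hinj), h]; rfl
    rw [ht] at this
    simp only [hy0, if_pos] at this
    exact hf y this
  · intro i hi
    have : Equiv.ofBijective t (Finite.injective_iff_bijective.mp hinj) i = t i := rfl
    rw [this] at hi ⊢
    rw [ht] at hi ⊢
    by_cases h : i ∈ C
    · simp [h]
    · simp [h] at hi

/-- Lower bound on `Perm(β.*(1-β))` via an arbitrary permutation. -/
theorem permanent_beta_ge_two_mul_prod
    (N : ℕ) (hN : 2 ≤ N) (β : Matrix (Fin N) (Fin N) ℝ)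
    (hβ : ∀ i j, 0 ≤ β i j ∧ β i j ≤ 1)
    (hrow : ∀ i, ∑ j, β i j = 1) (hcol : ∀ j, ∑ i, β i j = 1)
    (π : Equiv.Perm (Fin N)) :
    Matrix.permanent (Matrix.of fun i j => β i j * (1 - β i j)) ≥
      2 * ∏ i, β i (π i) * (1 - β i (π i)) := by
  classical
  have hN0 : 0 < N := by omega
  set M : Matrix (Fin N) (Fin N) ℝ := Matrix.of fun i j => β i j * (1 - β i j) with hM
  set T : Equiv.Perm (Fin N) × (Fin N → Fin N) → ℝ :=
    fun p => ∏ i, β i (p.1 i) * β i (p.2 i) with hTdef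
  have hT0 : ∀ p, 0 ≤ T p := by
    intro p
    exact Finset.prod_nonneg fun i _ => mul_nonneg (hβ i _).1 (hβ i _).1
  set Dfun : (Fin N → Fin N) → Finset (Fin N → Fin N) :=
    fun s => Finset.univ.filter (fun f => ∀ i, f i ≠ s i) with hDfun
  -- Step A : expansion of the diagonal product
  have h1 : ∀ s : Fin N → Fin N,
      ∏ i, β i (s i) * (1 - β i (s i)) = ∑ f ∈ Dfun s, ∏ i, β i (s i) * β i (f i) := by
    intro s
    have hstep : ∀ i : Fin N, β i (s i) * (1 - β i (s i))
        = ∑ j ∈ Finset.univ.erase (s i), β i (s i) * β i j := by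
      intro i
      rw [← Finset.mul_sum]
      congr 1
      rw [Finset.sum_erase_eq_sub (Finset.mem_univ (s i)), hrow i]
    have hps : Fintype.piFinset (fun i => Finset.univ.erase (s i)) = Dfun s := by
      ext f
      simp [hDfun, Fintype.mem_piFinset]
    rw [Finset.prod_congr rfl (fun i _ => hstep i), Finset.prod_univ_sum, hps]
  -- permanent as a sum over (σ, f) pairs
  have hperm : M.permanent = ∑ σ : Equiv.Perm (Fin N), ∏ i, M i (σ i) := by
    rw [Matrix.permanent, ← Equiv.sum_comp (Equiv.inv (Equiv.Perm (Fin N)))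
      (fun σ => ∏ i, M i (σ i))]
    refine Finset.sum_congr rfl fun σ _ => ?_
    rw [← Equiv.prod_comp σ (fun i => M i ((Equiv.inv (Equiv.Perm (Fin N)) σ) i))]
    simp
  set B : Finset (Equiv.Perm (Fin N) × (Fin N → Fin N)) :=
    Finset.univ.filter (fun p => ∀ i, p.2 i ≠ p.1 i) with hB
  have hBsum : M.permanent = ∑ p ∈ B, T p := by
    rw [hperm, hB, Finset.sum_filter, Fintype.sum_prod_type]
    refine Finset.sum_congr rfl fun σ _ => ?_
    have : ∏ i, M i (σ i) = ∑ f ∈ Dfun ⇑σ, T (σ, f) := by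
      have := h1 ⇑σ
      simpa [hM, hTdef] using this
    rw [this, hDfun, Finset.sum_filter]
  -- the injection Φ
  set Φ : (Fin N → Fin N) → Equiv.Perm (Fin N) × (Fin N → Fin N) :=
    fun f => if h : ∀ i, π.symm (f i) ≠ i then
      (π * Classical.choose (exists_cycle_perm hN0 (fun i => π.symm (f i)) h),
       fun i => if Classical.choose (exists_cycle_perm hN0 (fun i => π.symm (f i)) h) i = i
                then f i else π i)
    else (1, f) with hΦ
  have hcond : ∀ f ∈ Dfun ⇑π, ∀ i, π.symm (f i) ≠ i := by
    intro f hf i h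
    have hfi : ∀ i, f i ≠ π i := (Finset.mem_filter.mp hf).2
    have h2 : π ((Equiv.symm π) (f i)) = π i := congrArg π h
    rw [Equiv.apply_symm_apply] at h2
    exact hfi i h2
  -- key pointwise facts about Φ on Dfun π
  have hΦspec : ∀ f ∈ Dfun ⇑π,
      (Φ f).1 ≠ π ∧ (∀ i, (Φ f).2 i ≠ (Φ f).1 i) ∧ T (Φ f) = T (π, f) := by
    intro f hf
    have hfi : ∀ i, f i ≠ π i := (Finset.mem_filter.mp hf).2
    have h := hcond f hf
    set τ := Classical.choose (exists_cycle_perm hN0 (fun i => π.symm (f i)) h) with hτ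
    obtain ⟨hτ1, hτ2⟩ := Classical.choose_spec (exists_cycle_perm hN0 (fun i => π.symm (f i)) h)
    have hΦf : Φ f = (π * τ, fun i => if τ i = i then f i else π i) := by
      rw [hΦ]; simp only [dif_pos h]; rfl
    rw [hΦf]
    refine ⟨?_, ?_, ?_⟩
    · intro hcontra
      exact hτ1 (by simpa using mul_left_cancel (hcontra.trans (mul_one π).symm))
    · intro i
      by_cases hi : τ i = i
      · simp only [hi, if_pos, Equiv.Perm.mul_apply]
        exact hfi i
      · simp only [hi, if_neg, Equiv.Perm.mul_apply, if_false]
        rw [hτ2 i hi, Equiv.apply_symm_apply]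
        exact fun hc => hfi i hc.symm
    · rw [hTdef]
      refine Finset.prod_congr rfl fun i _ => ?_
      by_cases hi : τ i = i
      · simp only [hi, if_pos, Equiv.Perm.mul_apply]
      · simp only [hi, if_neg, Equiv.Perm.mul_apply, if_false]
        rw [hτ2 i hi, Equiv.apply_symm_apply, mul_comm]
  have hΦinj : ∀ f₁ ∈ Dfun ⇑π, ∀ f₂ ∈ Dfun ⇑π, Φ f₁ = Φ f₂ → f₁ = f₂ := by
    intro f₁ hf₁ f₂ hf₂ heq
    have h₁ := hcond f₁ hf₁
    have h₂ := hcond f₂ hf₂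
    set τ₁ := Classical.choose (exists_cycle_perm hN0 (fun i => π.symm (f₁ i)) h₁) with hτ₁d
    set τ₂ := Classical.choose (exists_cycle_perm hN0 (fun i => π.symm (f₂ i)) h₂) with hτ₂d
    obtain ⟨_, hs₁⟩ := Classical.choose_spec (exists_cycle_perm hN0 (fun i => π.symm (f₁ i)) h₁)
    obtain ⟨_, hs₂⟩ := Classical.choose_spec (exists_cycle_perm hN0 (fun i => π.symm (f₂ i)) h₂)
    have hΦ₁ : Φ f₁ = (π * τ₁, fun i => if τ₁ i = i then f₁ i else π i) := by
      rw [hΦ]; simp only [dif_pos h₁]; rfl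
    have hΦ₂ : Φ f₂ = (π * τ₂, fun i => if τ₂ i = i then f₂ i else π i) := by
      rw [hΦ]; simp only [dif_pos h₂]; rfl
    rw [hΦ₁, hΦ₂, Prod.mk.injEq] at heq
    have hττ : τ₁ = τ₂ := mul_left_cancel heq.1
    have hg := heq.2
    funext i
    by_cases hi : τ₁ i = i
    · have hgi := congrFun hg i
      simp only [hi, if_pos] at hgi
      rw [← hττ, hi] at hgi
      simp only [if_pos] at hgi
      exact hgi
    · have e₁ : τ₁ i = π.symm (f₁ i) := hs₁ i hi
      have hi₂ : τ₂ i ≠ i := by rw [← hττ]; exact hi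
      have e₂ : τ₂ i = π.symm (f₂ i) := hs₂ i hi₂
      have : π.symm (f₁ i) = π.symm (f₂ i) := by rw [← e₁, ← e₂, hττ]
      exact (Equiv.symm π).injective this
  -- assemble
  set E₁ := (Dfun ⇑π).image (fun f => ((π : Equiv.Perm (Fin N)), f)) with hE₁
  set E₂ := (Dfun ⇑π).image Φ with hE₂
  have hE₁B : E₁ ⊆ B := by
    intro p hp
    obtain ⟨f, hf, rfl⟩ := Finset.mem_image.mp hp
    rw [hB, Finset.mem_filter]
    exact ⟨Finset.mem_univ _, (Finset.mem_filter.mp hf).2⟩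
  have hE₂B : E₂ ⊆ B := by
    intro p hp
    obtain ⟨f, hf, rfl⟩ := Finset.mem_image.mp hp
    rw [hB, Finset.mem_filter]
    exact ⟨Finset.mem_univ _, (hΦspec f hf).2.1⟩
  have hdisj : Disjoint E₁ E₂ := by
    rw [Finset.disjoint_left]
    intro p hp₁ hp₂
    obtain ⟨f, hf, rfl⟩ := Finset.mem_image.mp hp₁
    obtain ⟨f', hf', heq⟩ := Finset.mem_image.mp hp₂
    exact (hΦspec f' hf').1 (congrArg Prod.fst heq)
  have hsumE₁ : ∑ p ∈ E₁, T p = ∑ f ∈ Dfun ⇑π, T (π, f) :=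
    Finset.sum_image (fun f _ g _ h => (Prod.mk.injEq _ _ _ _ ▸ h).2)
  have hsumE₂ : ∑ p ∈ E₂, T p = ∑ f ∈ Dfun ⇑π, T (π, f) := by
    rw [Finset.sum_image hΦinj]
    exact Finset.sum_congr rfl fun f hf => (hΦspec f hf).2.2
  have hP : ∑ f ∈ Dfun ⇑π, T (π, f) = ∏ i, β i (π i) * (1 - β i (π i)) := (h1 ⇑π).symm
  have hfinal : ∑ p ∈ E₁ ∪ E₂, T p ≤ M.permanent := by
    rw [hBsum]
    exact Finset.sum_le_sum_of_subset_of_nonneg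
      (Finset.union_subset hE₁B hE₂B) (fun p _ _ => hT0 p)
  rw [Finset.sum_union hdisj, hsumE₁, hsumE₂, hP] at hfinal
  rw [ge_iff_le, two_mul]
  exact hfinal
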